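/- arXiv:1802.07964 — 6 statements merged into one kernel-verified Lean document; each statement's English description precedes it below -/
import Mathlib

section
/- Let A be an antiunitary operator (A = U_A K with U_A unitary and K complex conjugation) and η = ±1. If H is an invertible matrix with polar decomposition H = UP and A H = η H' A where H' is another invertible matrix with polar decomposition H' = U'P', then A U = η U' A and P' = U_A P* U_A†. -/
open scoped ComplexOrder

open Matrix

/-- An antiunitary (anti-)symmetry `A = U_A K` (with `U_A` unitary, `K` entrywise complex
conjugation, `η = ±1`) relating two invertible matrices `H`, `H'` via `A H = η H' A`
(i.e. `U_A H* = η H' U_A`) passes to their polar decompositions `H = U P`, `H' = U' P'`: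
`U_A U* = η U' U_A` and `P' = U_A P* U_Aᴴ`. -/
theorem antiunitary_symmetry_polar_parts {n : ℕ}
    (H H' U U' P P' UA : Matrix (Fin n) (Fin n) ℂ) (η : ℂ)
    (hη : η = 1 ∨ η = -1)
    (hUA : UA ∈ Matrix.unitaryGroup (Fin n) ℂ)
    (hH : IsUnit H.det) (hH' : IsUnit H'.det)
    (hU : U ∈ Matrix.unitaryGroup (Fin n) ℂ)
    (hU' : U' ∈ Matrix.unitaryGroup (Fin n) ℂ)
    (hP : P.PosDef) (hP' : P'.PosDef)
    (hpolar : H = U * P) (hpolar' : H' = U' * P')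
    (hsym : UA * H.map (starRingEnd ℂ) = η • (H' * UA)) :
    UA * U.map (starRingEnd ℂ) = η • (U' * UA) ∧
      P' = UA * P.map (starRingEnd ℂ) * UA.conjTranspose := by
  have hη2 : η * η = 1 := by rcases hη with rfl | rfl <;> ring
  have hηs : star η = η := by rcases hη with rfl | rfl <;> simp
  have hUA1 : UA * UAᴴ = 1 := by
    simpa [Matrix.star_eq_conjTranspose] using (Matrix.mem_unitaryGroup_iff).mp hUA
  have hUA2 : UAᴴ * UA = 1 := by
    simpa [Matrix.star_eq_conjTranspose] using (Matrix.mem_unitaryGroup_iff').mp hUA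
  have hU2 : Uᴴ * U = 1 := by
    simpa [Matrix.star_eq_conjTranspose] using (Matrix.mem_unitaryGroup_iff').mp hU
  have hU'2 : U'ᴴ * U' = 1 := by
    simpa [Matrix.star_eq_conjTranspose] using (Matrix.mem_unitaryGroup_iff').mp hU'
  set φ := starRingEnd ℂ
  set V : Matrix (Fin n) (Fin n) ℂ := η • (UA * U.map φ * UAᴴ) with hV
  set Q : Matrix (Fin n) (Fin n) ℂ := UA * P.map φ * UAᴴ with hQ
  have hH'eq : H' = V * Q := by
    have h1 : UA * H.map φ * UAᴴ = η • H' := by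
      calc UA * H.map φ * UAᴴ = (η • (H' * UA)) * UAᴴ := by rw [hsym]
        _ = η • (H' * (UA * UAᴴ)) := by rw [Matrix.smul_mul, mul_assoc]
        _ = η • H' := by rw [hUA1, mul_one]
    have h2 : H.map φ = U.map φ * P.map φ := by rw [hpolar, Matrix.map_mul]
    calc H' = (η * η) • H' := by rw [hη2, one_smul]
      _ = η • (UA * H.map φ * UAᴴ) := by rw [← smul_smul, h1]
      _ = V * Q := by
          rw [hV, hQ, Matrix.smul_mul, h2]
          congr 1
          calc UA * (U.map φ * P.map φ) * UAᴴ
              = UA * U.map φ * (1 : Matrix (Fin n) (Fin n) ℂ) * P.map φ * UAᴴ := by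
                simp [mul_assoc]
            _ = UA * U.map φ * UAᴴ * (UA * P.map φ * UAᴴ) := by
                rw [← hUA2]; simp [mul_assoc]
  have hPmap : P.map φ = Pᵀ := by
    have h := hP.1
    rw [Matrix.IsHermitian] at h
    calc P.map φ = Pᴴᵀ := by ext i j; simp [Matrix.conjTranspose_apply, φ]
      _ = Pᵀ := by rw [h]
  have hQps : Q.PosSemidef := by
    rw [hQ, hPmap]
    exact (hP.transpose.posSemidef).mul_mul_conjTranspose_same UA
  have hUmap : (U.map φ)ᴴ = Uᵀ := by
    ext i j; simp [Matrix.conjTranspose_apply, φ]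
  have hUtU : Uᵀ * U.map φ = 1 := by
    have h3 : (Uᴴ)ᵀ = U.map φ := by ext i j; simp [Matrix.conjTranspose_apply, φ]
    calc Uᵀ * U.map φ = Uᵀ * (Uᴴ)ᵀ := by rw [h3]
      _ = (Uᴴ * U)ᵀ := by rw [Matrix.transpose_mul]
      _ = 1 := by rw [hU2, Matrix.transpose_one]
  have hVV : Vᴴ * V = 1 := by
    have hVt : Vᴴ = η • (UA * Uᵀ * UAᴴ) := by
      rw [hV, Matrix.conjTranspose_smul, hηs]
      congr 1
      rw [Matrix.conjTranspose_mul, Matrix.conjTranspose_mul, Matrix.conjTranspose_conjTranspose,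
        hUmap, mul_assoc]
    calc Vᴴ * V = (η * η) • (UA * Uᵀ * UAᴴ * (UA * U.map φ * UAᴴ)) := by
          rw [hVt, hV, Matrix.smul_mul, Matrix.mul_smul, smul_smul]
      _ = UA * (Uᵀ * (UAᴴ * UA) * U.map φ) * UAᴴ := by
          rw [hη2, one_smul]; simp [mul_assoc]
      _ = 1 := by rw [hUA2, mul_one, hUtU, mul_one, hUA1]
  have hsq : P' ^ 2 = Q ^ 2 := by
    have e1 : H'ᴴ * H' = P' ^ 2 := by
      rw [hpolar', Matrix.conjTranspose_mul, sq]
      calc P'ᴴ * U'ᴴ * (U' * P') = P'ᴴ * (U'ᴴ * U') * P' := by simp [mul_assoc]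
        _ = P' * P' := by rw [hU'2, mul_one, hP'.1.eq]
    have e2 : H'ᴴ * H' = Q ^ 2 := by
      rw [hH'eq, Matrix.conjTranspose_mul, sq]
      calc Qᴴ * Vᴴ * (V * Q) = Qᴴ * (Vᴴ * V) * Q := by simp [mul_assoc]
        _ = Q * Q := by rw [hVV, mul_one, hQps.1.eq]
    rw [← e1, e2]
  have hPQ : P' = Q := by
    open scoped MatrixOrder Matrix.Norms.L2Operator in
    exact (CFC.sq_eq_sq_iff P' Q hP'.posSemidef.nonneg hQps.nonneg).mp hsq
  have hUV : U' = V := by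
    refine hP'.isUnit.mul_right_cancel ?_
    rw [← hpolar', hH'eq, hPQ]
  refine ⟨?_, hPQ⟩
  rw [hUV, hV, Matrix.smul_mul, smul_smul, hη2, one_smul, mul_assoc, hUA2, mul_one]
end

section
/- Let U : ℝ → U(n) be a smooth loop of unitary matrices satisfying U_A U(-k)* = η U(k) U_A for an antiunitary symmetry with fixed unitary U_A and η = ±1. Then the function k ↦ Tr[U(k)† ∂_k U(k)] is an even function of k. -/
set_option maxRecDepth 8000

/-- For a smooth family `U k` of unitary matrices (with entrywise derivative `U' k`)
satisfying the antiunitary symmetry `U_A U(-k)* = η U(k) U_A` (`U_A` unitary, `η = ±1`),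
the function `k ↦ Tr[U(k)ᴴ ∂ₖ U(k)]` is even in `k`. -/
theorem trace_log_deriv_even_of_antiunitary_symmetry {n : ℕ}
    (U U' : ℝ → Matrix (Fin n) (Fin n) ℂ) (UA : Matrix (Fin n) (Fin n) ℂ)
    (η : ℂ) (hη : η = 1 ∨ η = -1)
    (hUA : UA ∈ Matrix.unitaryGroup (Fin n) ℂ)
    (hUk : ∀ k, U k ∈ Matrix.unitaryGroup (Fin n) ℂ)
    (hderiv : ∀ k i j, HasDerivAt (fun t => U t i j) (U' k i j) k)
    (hsym : ∀ k, UA * (U (-k)).map (starRingEnd ℂ) = η • (U k * UA)) :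
    ∀ k : ℝ, ((U (-k)).conjTranspose * U' (-k)).trace
      = ((U k).conjTranspose * U' k).trace := by
  intro k
  have hUAl : UA.conjTranspose * UA = 1 := hUA.1
  have hUAr : UA * UA.conjTranspose = 1 := hUA.2
  -- derivative of entries of U(-t)
  have hdneg : ∀ k i j, HasDerivAt (fun t => U (-t) i j) (-(U' (-k) i j)) k := by
    intro k i j
    have := HasDerivAt.scomp k (hderiv (-k) i j) (hasDerivAt_neg k)
    simpa [Function.comp_def] using this
  -- differentiate the symmetry relation
  have hdsym : ∀ k, UA * (U' (-k)).map (starRingEnd ℂ) = (-η) • (U' k * UA) := by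
    intro k
    ext i j
    have hL : HasDerivAt (fun t => ∑ l, UA i l * star (U (-t) l j))
        (∑ l, UA i l * star (-(U' (-k) l j))) k :=
      HasDerivAt.fun_sum fun l _ => ((hdneg k l j).star).const_mul (UA i l)
    have hR : HasDerivAt (fun t => η * ∑ l, U t i l * UA l j)
        (η * ∑ l, U' k i l * UA l j) k :=
      (HasDerivAt.fun_sum fun l _ => (hderiv k i l).mul_const (UA l j)).const_mul η
    have hfun : (fun t => ∑ l, UA i l * star (U (-t) l j))
        = fun t => η * ∑ l, U t i l * UA l j := by
      funext t
      have h := congrFun (congrFun (hsym t) i) j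
      simp only [Matrix.mul_apply, Matrix.map_apply, Matrix.smul_apply,
        starRingEnd_apply, smul_eq_mul] at h
      rw [h, Finset.mul_sum]
    have huniq := (hfun ▸ hL).unique hR
    have h2 : -∑ l, UA i l * star (U' (-k) l j) = η * ∑ l, U' k i l * UA l j := by
      rw [← huniq, ← Finset.sum_neg_distrib]
      congr 1; funext l; rw [star_neg, mul_neg]
    show (UA * (U' (-k)).map (starRingEnd ℂ)) i j = ((-η) • (U' k * UA)) i j
    simp only [Matrix.mul_apply, Matrix.map_apply, Matrix.smul_apply,
      starRingEnd_apply, smul_eq_mul, neg_mul, Finset.mul_sum] at h2 ⊢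
    rw [← neg_eq_iff_eq_neg.mpr h2.symm]
    exact (Finset.sum_neg_distrib ..).symm
  -- differentiate unitarity : U'ᴴ U + Uᴴ U' = 0
  have hanti : (U' k).conjTranspose * U k + (U k).conjTranspose * U' k = 0 := by
    ext i j
    have hL : HasDerivAt (fun t => ∑ l, star (U t l i) * U t l j)
        (∑ l, (star (U' k l i) * U k l j + star (U k l i) * U' k l j)) k :=
      HasDerivAt.fun_sum fun l _ => ((hderiv k l i).star).mul (hderiv k l j)
    have hfun : (fun t => ∑ l, star (U t l i) * U t l j)
        = fun _ => (1 : Matrix (Fin n) (Fin n) ℂ) i j := by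
      funext t
      have h := congrFun (congrFun (hUk t).1 i) j
      simp only [Matrix.mul_apply, Matrix.conjTranspose_apply, starRingEnd_apply] at h
      exact h
    have huniq := (hfun ▸ hL).unique (hasDerivAt_const k _)
    show ((U' k).conjTranspose * U k) i j + ((U k).conjTranspose * U' k) i j
      = (0 : Matrix (Fin n) (Fin n) ℂ) i j
    simp only [Matrix.mul_apply, Matrix.conjTranspose_apply, Matrix.zero_apply,
      starRingEnd_apply, ← Finset.sum_add_distrib]
    exact huniq
  -- algebraic consequences of the symmetry
  have hη2 : η * η = 1 := by rcases hη with h | h <;> simp [h]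
  have hηstar : star η = η := by rcases hη with h | h <;> simp [h]
  have hP : (U (-k)).map (starRingEnd ℂ)
      = η • (UA.conjTranspose * (U k * UA)) := by
    have := congrArg (fun M => UA.conjTranspose * M) (hsym k)
    simpa [← Matrix.mul_assoc, hUAl, Matrix.mul_smul] using this
  have hQ : (U' (-k)).map (starRingEnd ℂ)
      = (-η) • (UA.conjTranspose * (U' k * UA)) := by
    have := congrArg (fun M => UA.conjTranspose * M) (hdsym k)
    simpa [← Matrix.mul_assoc, hUAl, Matrix.mul_smul] using this
  -- trace identity : Tr[Aᴴ B] = Tr[(B̄)ᴴ Ā]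
  have key : ∀ A B : Matrix (Fin n) (Fin n) ℂ, (A.conjTranspose * B).trace
      = ((B.map (starRingEnd ℂ)).conjTranspose * A.map (starRingEnd ℂ)).trace := by
    intro A B
    simp [Matrix.trace, Matrix.mul_apply, Matrix.conjTranspose_apply,
      Matrix.map_apply, mul_comm]
  -- conjugation by the unitary UA preserves such traces
  have conj_trace : ∀ A B : Matrix (Fin n) (Fin n) ℂ,
      ((UA.conjTranspose * (A * UA)).conjTranspose
        * (UA.conjTranspose * (B * UA))).trace
      = (A.conjTranspose * B).trace := by
    intro A B
    rw [Matrix.conjTranspose_mul, Matrix.conjTranspose_mul,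
      Matrix.conjTranspose_conjTranspose]
    simp only [Matrix.mul_assoc]
    rw [← Matrix.mul_assoc UA UA.conjTranspose, hUAr, Matrix.one_mul,
      Matrix.trace_mul_comm, Matrix.mul_assoc, Matrix.mul_assoc,
      hUAr, Matrix.mul_one]
  calc ((U (-k)).conjTranspose * U' (-k)).trace
      = (((U' (-k)).map (starRingEnd ℂ)).conjTranspose
          * (U (-k)).map (starRingEnd ℂ)).trace := key _ _
    _ = (((-η) • (UA.conjTranspose * (U' k * UA))).conjTranspose
          * (η • (UA.conjTranspose * (U k * UA)))).trace := by rw [hP, hQ]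
    _ = (star (-η) * η) • ((UA.conjTranspose * (U' k * UA)).conjTranspose
          * (UA.conjTranspose * (U k * UA))).trace := by
        rw [Matrix.conjTranspose_smul, Matrix.smul_mul, Matrix.mul_smul,
          smul_smul, Matrix.trace_smul]
    _ = - ((U' k).conjTranspose * U k).trace := by
        rw [conj_trace, star_neg, hηstar, neg_mul, hη2]
        simp
    _ = ((U k).conjTranspose * U' k).trace := by
        rw [eq_neg_of_add_eq_zero_left hanti]
        simp
end

section
/- The winding number of the function f(k) = J_R e^{-ik} + J_L e^{ik} around the origin, as k runs from -π to π, equals 1 if |J_R| < |J_L| and -1 if |J_R| > |J_L|. -/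
open Complex Real intervalIntegral

private lemma abs_exp_I_mul (c : ℂ) (hc : c.re = 0) (k : ℝ) :
    ‖Complex.exp (c * k)‖ = 1 := by
  rw [Complex.norm_exp]
  have : (c * (k:ℂ)).re = 0 := by simp [Complex.mul_re, hc]
  rw [this, Real.exp_zero]

private lemma den_ne (JR JL : ℂ) (h : ‖JR‖ < ‖JL‖) (k : ℝ) :
    JR * Complex.exp (-Complex.I * k) + JL * Complex.exp (Complex.I * k) ≠ 0 := by
  intro hc
  have h1 : ‖JR * Complex.exp (-Complex.I * k)‖ = ‖JR‖ := by
    rw [norm_mul, abs_exp_I_mul (-Complex.I) (by simp) k, mul_one]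
  have h2 : ‖JL * Complex.exp (Complex.I * k)‖ = ‖JL‖ := by
    rw [norm_mul, abs_exp_I_mul Complex.I (by simp) k, mul_one]
  have heq : JR * Complex.exp (-Complex.I * k) = -(JL * Complex.exp (Complex.I * k)) := by
    linear_combination hc
  rw [heq, norm_neg, h2] at h1
  exact absurd h1.symm (ne_of_lt h)

private lemma one_add_ne {w : ℂ} (h : ‖w‖ < 1) : (1 : ℂ) + w ≠ 0 := by
  intro hc
  have : w = -1 := by linear_combination hc
  rw [this] at h; simp at h

private lemma key (JR JL : ℂ) (h : ‖JR‖ < ‖JL‖) :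
    (∫ k in (-Real.pi)..Real.pi,
        (-Complex.I * JR * Complex.exp (-Complex.I * k)
          + Complex.I * JL * Complex.exp (Complex.I * k)) /
        (JR * Complex.exp (-Complex.I * k) + JL * Complex.exp (Complex.I * k)))
      = 2 * Real.pi * Complex.I := by
  have hJL : JL ≠ 0 := by
    intro hc; rw [hc] at h; simp at h
    exact absurd h (norm_nonneg JR).not_gt
  set z : ℂ := JR / JL with hz
  have hJR : JR = z * JL := by rw [hz, div_mul_cancel₀ JR hJL]
  have hzabs : ‖z‖ < 1 := by
    rw [hz, norm_div, div_lt_one (norm_pos_iff.mpr hJL)]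
    exact h
  set F : ℝ → ℂ := fun k => Complex.I * k + Complex.log (1 + z * Complex.exp (-2 * Complex.I * k)) with hF
  have habs2 : ∀ k : ℝ, ‖z * Complex.exp (-2 * Complex.I * k)‖ < 1 := by
    intro k
    rw [norm_mul, abs_exp_I_mul (-2*Complex.I) (by simp) k, mul_one]; exact hzabs
  have hu_ne : ∀ k : ℝ, (1 : ℂ) + z * Complex.exp (-2 * Complex.I * k) ≠ 0 :=
    fun k => one_add_ne (habs2 k)
  have hu_slit : ∀ k : ℝ, (1 : ℂ) + z * Complex.exp (-2 * Complex.I * k) ∈ Complex.slitPlane := by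
    intro k
    rw [Complex.mem_slitPlane_iff]
    left
    have h1 := Complex.abs_re_le_norm (z * Complex.exp (-2 * Complex.I * k))
    have h2 := abs_lt.mp (lt_of_le_of_lt h1 (habs2 k))
    simp only [Complex.add_re, Complex.one_re]
    linarith [h2.1]
  have hderiv : ∀ k : ℝ, HasDerivAt F
      ((-Complex.I * JR * Complex.exp (-Complex.I * k)
          + Complex.I * JL * Complex.exp (Complex.I * k)) /
        (JR * Complex.exp (-Complex.I * k) + JL * Complex.exp (Complex.I * k))) k := by
    intro k
    have hexp : HasDerivAt (fun w : ℂ => Complex.exp (-2 * Complex.I * w))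
        (Complex.exp (-2 * Complex.I * (k:ℝ)) * (-2 * Complex.I)) ((k:ℝ):ℂ) := by
      simpa using ((hasDerivAt_id ((k:ℝ):ℂ)).const_mul (-2 * Complex.I)).cexp
    have hlog : HasDerivAt (fun w : ℂ => Complex.log (1 + z * Complex.exp (-2 * Complex.I * w)))
        ((z * (Complex.exp (-2 * Complex.I * (k:ℝ)) * (-2 * Complex.I))) /
          (1 + z * Complex.exp (-2 * Complex.I * (k:ℝ)))) ((k:ℝ):ℂ) :=
      ((hexp.const_mul z).const_add 1).clog (hu_slit k)
    have hid : HasDerivAt (fun w : ℂ => Complex.I * w) Complex.I ((k:ℝ):ℂ) := by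
      simpa using (hasDerivAt_id ((k:ℝ):ℂ)).const_mul Complex.I
    have hFr := (hid.add hlog).comp_ofReal
    convert hFr using 1
    · rfl
    have hden := den_ne JR JL h k
    have hY := hu_ne k
    have hE : Complex.exp (-Complex.I * (k:ℝ)) * Complex.exp (Complex.I * (k:ℝ)) = 1 := by
      rw [← Complex.exp_add]; ring_nf; exact Complex.exp_zero
    have hE2 : Complex.exp (-2 * Complex.I * (k:ℝ))
        = Complex.exp (-Complex.I * (k:ℝ)) * Complex.exp (-Complex.I * (k:ℝ)) := by
      rw [← Complex.exp_add]; ring_nf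
    have hzJ : z * JL = JR := by rw [hz, div_mul_cancel₀ JR hJL]
    rw [hE2] at hY ⊢
    have trick : ∀ (A B X Y : ℂ), B ≠ 0 → Y ≠ 0 →
        A * Y = (Complex.I * Y + X) * B → A / B = Complex.I + X / Y := by
      intro A B X Y hB hYne hcross
      field_simp
      linear_combination hcross
    apply trick _ _ _ _ hden hY
    linear_combination (2*Complex.I*z*JL*Complex.exp (-Complex.I*(k:ℝ)))*hE
      + (2*Complex.I*Complex.exp (-Complex.I*(k:ℝ)))*hzJ
  have hcont : Continuous (fun k : ℝ =>
      (-Complex.I * JR * Complex.exp (-Complex.I * k)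
          + Complex.I * JL * Complex.exp (Complex.I * k)) /
        (JR * Complex.exp (-Complex.I * k) + JL * Complex.exp (Complex.I * k))) := by
    apply Continuous.div
    · fun_prop
    · fun_prop
    · exact fun k => den_ne JR JL h k
  have := intervalIntegral.integral_eq_sub_of_hasDerivAt
    (f := F) (a := -Real.pi) (b := Real.pi)
    (fun x _ => hderiv x) (hcont.intervalIntegrable _ _)
  rw [this]
  have h1 : Complex.exp (-2 * Complex.I * ((Real.pi : ℝ) : ℂ)) = 1 := by
    rw [show (-2 * Complex.I * ((Real.pi:ℝ):ℂ)) = -(2 * (Real.pi:ℂ) * Complex.I) by push_cast; ring,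
      Complex.exp_neg, Complex.exp_two_pi_mul_I, inv_one]
  have h2 : Complex.exp (-2 * Complex.I * (-((Real.pi : ℝ) : ℂ))) = 1 := by
    rw [show (-2 * Complex.I * (-((Real.pi:ℝ):ℂ))) = 2 * (Real.pi:ℂ) * Complex.I by push_cast; ring,
      Complex.exp_two_pi_mul_I]
  simp only [hF, Complex.ofReal_neg]
  rw [h1, h2]
  ring

/-- The winding number of `f(k) = J_R e^{-ik} + J_L e^{ik}` around the origin as `k`
runs from `-π` to `π` equals `1` if `|J_R| < |J_L|` and `-1` if `|J_R| > |J_L|`: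
`∫_{-π}^{π} (dk/2πi) f'(k)/f(k) = ±1`. -/
theorem winding_number_asymmetric_hopping (JR JL : ℂ) :
    (‖JR‖ < ‖JL‖ →
      (∫ k in (-Real.pi)..Real.pi,
          (-Complex.I * JR * Complex.exp (-Complex.I * k)
            + Complex.I * JL * Complex.exp (Complex.I * k)) /
          (JR * Complex.exp (-Complex.I * k) + JL * Complex.exp (Complex.I * k)))
        = 2 * Real.pi * Complex.I) ∧
    (‖JL‖ < ‖JR‖ →
      (∫ k in (-Real.pi)..Real.pi,
          (-Complex.I * JR * Complex.exp (-Complex.I * k)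
            + Complex.I * JL * Complex.exp (Complex.I * k)) /
          (JR * Complex.exp (-Complex.I * k) + JL * Complex.exp (Complex.I * k)))
        = -(2 * Real.pi * Complex.I)) := by
  constructor
  · exact key JR JL
  · intro h
    have hswap := key JL JR h
    have heq : ∀ k : ℝ,
        (-Complex.I * JR * Complex.exp (-Complex.I * k)
            + Complex.I * JL * Complex.exp (Complex.I * k)) /
          (JR * Complex.exp (-Complex.I * k) + JL * Complex.exp (Complex.I * k))
        = -((fun k : ℝ =>
            (-Complex.I * JL * Complex.exp (-Complex.I * k)
              + Complex.I * JR * Complex.exp (Complex.I * k)) /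
            (JL * Complex.exp (-Complex.I * k) + JR * Complex.exp (Complex.I * k))) (-k)) := by
      intro k
      simp only
      have e1 : (-Complex.I * ((-k : ℝ) : ℂ)) = Complex.I * k := by push_cast; ring
      have e2 : (Complex.I * ((-k : ℝ) : ℂ)) = -Complex.I * k := by push_cast; ring
      rw [e1, e2]
      ring
    rw [intervalIntegral.integral_congr (fun k _ => heq k)]
    rw [intervalIntegral.integral_neg]
    rw [intervalIntegral.integral_comp_neg (fun k : ℝ =>
        (-Complex.I * JL * Complex.exp (-Complex.I * k)
          + Complex.I * JR * Complex.exp (Complex.I * k)) /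
        (JL * Complex.exp (-Complex.I * k) + JR * Complex.exp (Complex.I * k)))]
    simp only [neg_neg]
    rw [hswap]
end

section
/- Let H be a Hermitian matrix with eigenvalues E_j and let E ∈ ℝ with d = min_j |E_j - E| > 0 and D = max_j |E_j - E|. Then for every unit vector ψ and every t with 0 < t < π/D, one has ‖e^{-iHt}ψ - e^{-iEt}ψ‖ > (2d/π) t. -/
open scoped Matrix.Norms.L2Operator in
lemma aux_clm_exp {n : ℕ} (M : Matrix (Fin n) (Fin n) ℂ) :
    Matrix.toEuclideanCLM (𝕜 := ℂ) (NormedSpace.exp M) =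
      NormedSpace.exp (Matrix.toEuclideanCLM (𝕜 := ℂ) M) := by
  have hc : Continuous (Matrix.toEuclideanCLM (𝕜 := ℂ) (n := Fin n)) :=
    LinearMap.continuous_of_finiteDimensional
      ((Matrix.toEuclideanCLM (𝕜 := ℂ) (n := Fin n) :
        Matrix (Fin n) (Fin n) ℂ ≃⋆ₐ[ℂ] _).toAlgEquiv.toLinearEquiv.toLinearMap)
  exact NormedSpace.map_exp_of_mem_ball (𝕂 := ℂ) (Matrix.toEuclideanCLM (𝕜 := ℂ) :
    Matrix (Fin n) (Fin n) ℂ ≃⋆ₐ[ℂ] _) hc M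
    ((NormedSpace.expSeries_radius_eq_top ℂ (Matrix (Fin n) (Fin n) ℂ)).symm ▸ edist_lt_top _ _)

lemma aux_exp_apply_eigenvector {V : Type*} [NormedAddCommGroup V] [NormedSpace ℂ V]
    [CompleteSpace V] (T : V →L[ℂ] V) (μ : ℂ) (v : V) (h : T v = μ • v) :
    NormedSpace.exp T v = Complex.exp μ • v := by
  have hpow : ∀ k : ℕ, (T ^ k) v = μ ^ k • v := by
    intro k
    induction k with
    | zero => simp
    | succ k ih =>
      rw [pow_succ, pow_succ, ContinuousLinearMap.mul_apply, h, map_smul, ih, smul_smul,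
        mul_comm]
  calc NormedSpace.exp T v = (∑' (k : ℕ), ((k.factorial : ℂ))⁻¹ • T ^ k) v := by
        rw [NormedSpace.exp_eq_tsum ℂ]
    _ = ∑' (k : ℕ), (((k.factorial : ℂ))⁻¹ • T ^ k) v :=
        (ContinuousLinearMap.apply ℂ V v).map_tsum (NormedSpace.expSeries_summable' T)
    _ = ∑' (k : ℕ), (((k.factorial : ℂ))⁻¹ * μ ^ k) • v := by
        refine tsum_congr fun k => ?_
        rw [ContinuousLinearMap.smul_apply, hpow, smul_smul]
    _ = (∑' (k : ℕ), ((k.factorial : ℂ))⁻¹ * μ ^ k) • v := by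
        refine Summable.tsum_smul_const ?_ v
        simpa [smul_eq_mul] using NormedSpace.expSeries_summable' (𝕂 := ℂ) μ
    _ = Complex.exp μ • v := by
        rw [Complex.exp_eq_exp_ℂ, NormedSpace.exp_eq_tsum ℂ]
        simp [smul_eq_mul]

lemma aux_norm_exp_I_sub_one_sq (θ : ℝ) :
    ‖Complex.exp ((θ : ℂ) * Complex.I) - 1‖ ^ 2 = 4 * Real.sin (θ / 2) ^ 2 := by
  have h : Complex.exp ((θ : ℂ) * Complex.I) - 1 =
      ((Real.cos θ - 1 : ℝ) : ℂ) + ((Real.sin θ : ℝ) : ℂ) * Complex.I := by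
    rw [Complex.exp_mul_I]
    push_cast [Complex.ofReal_cos, Complex.ofReal_sin]
    ring
  rw [h, Complex.norm_def, Complex.normSq_add_mul_I,
    Real.sq_sqrt (by positivity)]
  have h1 := Real.sin_sq_add_cos_sq (θ / 2)
  have h2 := Real.cos_two_mul (θ / 2)
  have h3 : 2 * (θ / 2) = θ := by ring
  rw [h3] at h2
  nlinarith [Real.sin_sq_add_cos_sq θ]

/-- In a Hermitian system, no quasi-eigenstate exists at an energy `E` separated from the
spectrum: if `H` is Hermitian with eigenvalues `E_j`, `d > 0` is a lower bound and `D` an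
upper bound for `|E_j - E|`, then for every unit vector `ψ` and every `0 < t < π/D`,
`‖e^{-iHt} ψ - e^{-iEt} ψ‖ > (2d/π) t`. -/
theorem hermitian_no_quasi_eigenstate {n : ℕ}
    (H : Matrix (Fin n) (Fin n) ℂ) (hH : H.IsHermitian) (E d D : ℝ)
    (hd : 0 < d) (hdle : ∀ j, d ≤ |hH.eigenvalues j - E|)
    (hDle : ∀ j, |hH.eigenvalues j - E| ≤ D)
    (ψ : EuclideanSpace ℂ (Fin n)) (hψ : ‖ψ‖ = 1)
    (t : ℝ) (ht0 : 0 < t) (htD : t < Real.pi / D) :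
    2 * d / Real.pi * t <
      ‖(Matrix.toEuclideanCLM (𝕜 := ℂ) (NormedSpace.exp ((-(Complex.I * t)) • H))) ψ
        - Complex.exp (-(Complex.I * E * t)) • ψ‖ := by
  have hπ : (0 : ℝ) < Real.pi := Real.pi_pos
  -- n is positive
  have hn : 0 < n := by
    rcases Nat.eq_zero_or_pos n with h0 | h0
    · subst h0
      have : ψ = 0 := Subsingleton.elim _ _
      rw [this, norm_zero] at hψ; norm_num at hψ
    · exact h0
  have hD : 0 < D := lt_of_lt_of_le hd ((hdle ⟨0, hn⟩).trans (hDle ⟨0, hn⟩))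
  have htDπ : t * D < Real.pi := (lt_div_iff₀ hD).mp htD
  set b := hH.eigenvectorBasis with hb
  set e : ℂ := Complex.exp (-(Complex.I * E * t)) with he
  set g : Fin n → ℂ := fun j => Complex.exp (-(Complex.I * t) * (hH.eigenvalues j : ℂ)) - e
    with hg
  set c : Fin n → ℂ := fun j => b.repr ψ j with hc
  -- the operator and its action on the eigenbasis
  set T : EuclideanSpace ℂ (Fin n) →L[ℂ] EuclideanSpace ℂ (Fin n) :=
    Matrix.toEuclideanCLM (𝕜 := ℂ) ((-(Complex.I * t)) • H) with hT
  have hHb : ∀ j, Matrix.toEuclideanCLM (𝕜 := ℂ) H (b j) = (hH.eigenvalues j : ℂ) • b j := by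
    intro j
    apply WithLp.ofLp_injective
    rw [Matrix.ofLp_toEuclideanCLM]
    have hmv := hH.mulVec_eigenvectorBasis j
    funext i
    simpa [Complex.real_smul] using congrFun hmv i
  have hTb : ∀ j, T (b j) = (-(Complex.I * t) * (hH.eigenvalues j : ℂ)) • b j := by
    intro j
    rw [hT, map_smul, ContinuousLinearMap.smul_apply, hHb, smul_smul]
  have hexpb : ∀ j, (NormedSpace.exp T) (b j) =
      Complex.exp (-(Complex.I * t) * (hH.eigenvalues j : ℂ)) • b j := fun j =>
    aux_exp_apply_eigenvector T _ (b j) (hTb j)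
  -- rewrite the vector in question
  have key : (Matrix.toEuclideanCLM (𝕜 := ℂ) (NormedSpace.exp ((-(Complex.I * t)) • H))) ψ
      - e • ψ = ∑ j, (g j * c j) • b j := by
    rw [aux_clm_exp, ← hT]
    conv_lhs => rw [← b.sum_repr ψ]
    rw [map_sum, Finset.smul_sum, ← Finset.sum_sub_distrib]
    refine Finset.sum_congr rfl fun j _ => ?_
    rw [map_smul, hexpb j, smul_smul, smul_smul, ← sub_smul]
    congr 1
    simp only [hg, hc]
    ring
  rw [key]
  -- coordinates of the sum
  have hrepr : ∀ i, b.repr (∑ j, (g j * c j) • b j) i = g i * c i := by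
    intro i
    rw [map_sum]
    have : ∀ j, b.repr ((g j * c j) • b j) = (g j * c j) • EuclideanSpace.single j (1 : ℂ) := by
      intro j; rw [map_smul, b.repr_self]
    simp_rw [this]
    rw [WithLp.ofLp_sum, Finset.sum_apply]
    simp [EuclideanSpace.single_apply]
  -- norm squared identities
  have hnormsq : ‖∑ j, (g j * c j) • b j‖ ^ 2 = ∑ i, ‖g i * c i‖ ^ 2 := by
    rw [← b.repr.norm_map, EuclideanSpace.norm_eq, Real.sq_sqrt (by positivity)]
    exact Finset.sum_congr rfl fun i _ => by rw [hrepr]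
  have hcsum : ∑ i, ‖c i‖ ^ 2 = 1 := by
    have h1 : Real.sqrt (∑ i, ‖b.repr ψ i‖ ^ 2) = 1 := by
      rw [← EuclideanSpace.norm_eq, b.repr.norm_map]; exact hψ
    exact Real.sqrt_eq_one.mp h1
  -- pointwise lower bound on ‖g j‖
  set m : ℝ := 2 * d / Real.pi * t with hm
  have hm0 : 0 ≤ m := by positivity
  have hgbound : ∀ j, m ^ 2 < ‖g j‖ ^ 2 := by
    intro j
    set θ : ℝ := -(t * (hH.eigenvalues j - E)) with hθ
    have hfac : g j = e * (Complex.exp ((θ : ℂ) * Complex.I) - 1) := by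
      rw [hg]
      simp only
      rw [mul_sub, mul_one, he, ← Complex.exp_add]
      congr 2
      push_cast [hθ]
      ring
    have hnorme : ‖e‖ = 1 := by
      rw [he]
      have : -(Complex.I * (E : ℂ) * (t : ℂ)) = ((-(E * t) : ℝ) : ℂ) * Complex.I := by
        push_cast; ring
      rw [this, Complex.norm_exp_ofReal_mul_I]
    have hng : ‖g j‖ ^ 2 = 4 * Real.sin (θ / 2) ^ 2 := by
      rw [hfac, norm_mul, hnorme, one_mul, aux_norm_exp_I_sub_one_sq]
    set x : ℝ := t * |hH.eigenvalues j - E| / 2 with hx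
    have hsin : Real.sin (θ / 2) ^ 2 = Real.sin x ^ 2 := by
      rcases abs_cases (hH.eigenvalues j - E) with ⟨habs, _⟩ | ⟨habs, _⟩
      · have : θ / 2 = -x := by rw [hθ, hx, habs]; ring
        rw [this, Real.sin_neg, neg_sq]
      · have : θ / 2 = x := by rw [hθ, hx, habs]; ring
        rw [this]
    have hx0 : 0 < x := by
      rw [hx]
      have := lt_of_lt_of_le hd (hdle j)
      positivity
    have hxlt : x < Real.pi / 2 := by
      rw [hx]
      have h1 : t * |hH.eigenvalues j - E| ≤ t * D :=
        mul_le_mul_of_nonneg_left (hDle j) ht0.le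
      linarith
    have hjordan : 2 / Real.pi * x < Real.sin x := Real.mul_lt_sin hx0 hxlt
    have hmx : m ≤ 2 / Real.pi * (2 * x) := by
      rw [hm, hx]
      have h1 : d * t ≤ |hH.eigenvalues j - E| * t :=
        mul_le_mul_of_nonneg_right (hdle j) ht0.le
      rw [div_mul_eq_mul_div, div_mul_eq_mul_div, div_le_div_iff₀ hπ hπ]
      nlinarith
    have hmsin : m < 2 * Real.sin x := by
      calc m ≤ 2 / Real.pi * (2 * x) := hmx
        _ = 2 * (2 / Real.pi * x) := by ring
        _ < 2 * Real.sin x := by linarith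
    have hsin0 : 0 < Real.sin x := lt_trans (by positivity) hjordan
    calc m ^ 2 < (2 * Real.sin x) ^ 2 := by
          exact pow_lt_pow_left₀ hmsin hm0 two_ne_zero
      _ = 4 * Real.sin x ^ 2 := by ring
      _ = ‖g j‖ ^ 2 := by rw [hng, hsin]
  -- there is a nonzero coordinate
  have hex : ∃ j, c j ≠ 0 := by
    by_contra hcon
    push_neg at hcon
    have : ∑ i, ‖c i‖ ^ 2 = 0 := by
      refine Finset.sum_eq_zero fun i _ => ?_
      rw [hcon i, norm_zero]; ring
    rw [hcsum] at this; norm_num at this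
  obtain ⟨j₀, hj₀⟩ := hex
  -- final strict comparison
  have hfinal : m ^ 2 < ∑ i, ‖g i * c i‖ ^ 2 := by
    have hnm : ∀ i, ‖g i * c i‖ ^ 2 = ‖g i‖ ^ 2 * ‖c i‖ ^ 2 := fun i => by
      rw [norm_mul, mul_pow]
    have hstep : ∀ i ∈ Finset.univ, m ^ 2 * ‖c i‖ ^ 2 ≤ ‖g i * c i‖ ^ 2 := by
      intro i _
      rw [hnm i]
      exact mul_le_mul_of_nonneg_right (hgbound i).le (sq_nonneg _)
    have hstrict : m ^ 2 * ‖c j₀‖ ^ 2 < ‖g j₀ * c j₀‖ ^ 2 := by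
      rw [hnm j₀]
      have hcpos : (0:ℝ) < ‖c j₀‖ ^ 2 := by
        have := norm_pos_iff.mpr hj₀
        positivity
      exact mul_lt_mul_of_pos_right (hgbound j₀) hcpos
    calc m ^ 2 = ∑ i, m ^ 2 * ‖c i‖ ^ 2 := by
          rw [← Finset.mul_sum, hcsum, mul_one]
      _ < ∑ i, ‖g i * c i‖ ^ 2 :=
          Finset.sum_lt_sum hstep ⟨j₀, Finset.mem_univ j₀, hstrict⟩
  have : m ^ 2 < ‖∑ j, (g j * c j) • b j‖ ^ 2 := by rwa [hnormsq]
  exact lt_of_pow_lt_pow_left₀ 2 (norm_nonneg _) this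
end

section
/- Let H be a Hermitian matrix acting on a Hilbert space, let ψ₁, …, ψ_D be unit vectors with ‖Hψ_n‖ < ε₁ for all n and |⟨ψ_m, ψ_n⟩| < ε₂ for all m ≠ n, where (D-1)ε₂ < 1. Then the ψ_n are linearly independent, and for every unit vector ψ in their span, ‖Hψ‖ < √D · ε₁ / √(1 - (D-1)ε₂). -/
open Finset

lemma key_lb {n D : ℕ} (ψ : Fin D → EuclideanSpace ℂ (Fin n))
    (ε₂ : ℝ)
    (hunit : ∀ j, ‖ψ j‖ = 1)
    (hortho : ∀ m j, m ≠ j → ‖(inner ℂ (ψ m) (ψ j) : ℂ)‖ < ε₂)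
    (c : Fin D → ℂ) :
    (1 - ((D : ℝ) - 1) * ε₂) * ∑ j, ‖c j‖ ^ 2 ≤ ‖∑ j, c j • ψ j‖ ^ 2 := by
  rcases Nat.lt_or_ge D 2 with hD | hD
  · interval_cases D
    · simp
    · simp [Fin.sum_univ_one, norm_smul, hunit 0, mul_pow]
  · have hε₂0 : 0 ≤ ε₂ := le_of_lt (lt_of_le_of_lt (norm_nonneg _)
      (hortho ⟨0, by omega⟩ ⟨1, by omega⟩ (by simp [Fin.ext_iff])))
    set S : ℝ := ∑ j, ‖c j‖ ^ 2 with hS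
    set L : ℝ := ∑ j, ‖c j‖ with hL
    set T : ℂ := ∑ j, ∑ k ∈ Finset.univ.erase j,
      (starRingEnd ℂ) (c j) * c k * inner ℂ (ψ j) (ψ k) with hT
    have hinner : (inner ℂ (∑ j, c j • ψ j) (∑ k, c k • ψ k) : ℂ) = (S : ℂ) + T := by
      rw [sum_inner]
      simp_rw [inner_sum, inner_smul_left, inner_smul_right]
      rw [hT, hS]
      push_cast
      rw [← Finset.sum_add_distrib]
      refine Finset.sum_congr rfl fun j _ => ?_
      rw [← Finset.sum_erase_add _ _ (Finset.mem_univ j)]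
      have : (starRingEnd ℂ) (c j) * (c j * inner ℂ (ψ j) (ψ j)) = (‖c j‖ : ℂ) ^ 2 := by
        rw [inner_self_eq_norm_sq_to_K, hunit j]
        push_cast
        rw [← mul_assoc, RCLike.conj_mul]
        simp
      rw [this, add_comm]
      congr 1
      refine Finset.sum_congr rfl fun k _ => by ring
    have hnormsq : ‖∑ j, c j • ψ j‖ ^ 2 = S + T.re := by
      have := norm_sq_eq_re_inner (𝕜 := ℂ) (∑ j, c j • ψ j)
      rw [this, hinner]
      simp
    have hTbound : ‖T‖ ≤ ε₂ * (L ^ 2 - S) := by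
      have h1 : ‖T‖ ≤ ∑ j, ∑ k ∈ Finset.univ.erase j, ‖c j‖ * ‖c k‖ * ε₂ := by
        refine le_trans (norm_sum_le _ _) (Finset.sum_le_sum fun j _ => ?_)
        refine le_trans (norm_sum_le _ _) (Finset.sum_le_sum fun k hk => ?_)
        rw [norm_mul, norm_mul, RCLike.norm_conj]
        exact mul_le_mul_of_nonneg_left
          (le_of_lt (hortho j k (Ne.symm (Finset.ne_of_mem_erase hk))))
          (mul_nonneg (norm_nonneg _) (norm_nonneg _))
      have h2 : ∑ j, ∑ k ∈ Finset.univ.erase j, ‖c j‖ * ‖c k‖ * ε₂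
          = ε₂ * (L ^ 2 - S) := by
        have : ∀ j : Fin D, ∑ k ∈ Finset.univ.erase j, ‖c j‖ * ‖c k‖ * ε₂
            = ε₂ * (‖c j‖ * (L - ‖c j‖)) := by
          intro j
          have he : ∑ k ∈ Finset.univ.erase j, ‖c k‖ = L - ‖c j‖ := by
            rw [Finset.sum_erase_eq_sub (Finset.mem_univ j)]
          calc ∑ k ∈ Finset.univ.erase j, ‖c j‖ * ‖c k‖ * ε₂
              = (‖c j‖ * ε₂) * ∑ k ∈ Finset.univ.erase j, ‖c k‖ := by
                rw [Finset.mul_sum]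
                exact Finset.sum_congr rfl fun k _ => by ring
            _ = ε₂ * (‖c j‖ * (L - ‖c j‖)) := by rw [he]; ring
        simp_rw [this]
        rw [← Finset.mul_sum]
        congr 1
        simp_rw [mul_sub]
        rw [Finset.sum_sub_distrib, ← Finset.sum_mul]
        simp [hL, hS, sq]
      linarith [h1, h2.le, h2.ge]
    have hCS : L ^ 2 ≤ (D : ℝ) * S := by
      have := sq_sum_le_card_mul_sum_sq (s := (Finset.univ : Finset (Fin D)))
        (f := fun j => ‖c j‖)
      simpa [hL, hS] using this
    have hre : -(ε₂ * (((D : ℝ) - 1) * S)) ≤ T.re := by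
      have h3 : ε₂ * (L ^ 2 - S) ≤ ε₂ * (((D : ℝ) - 1) * S) := by
        apply mul_le_mul_of_nonneg_left _ hε₂0
        nlinarith
      have h4 : |T.re| ≤ ‖T‖ := Complex.abs_re_le_norm T
      have := abs_le.mp h4
      linarith
    have hSnn : 0 ≤ S := Finset.sum_nonneg fun j _ => sq_nonneg _
    rw [hnormsq]
    nlinarith

/-- Almost-orthonormal almost-null vectors: if `ψ₁, …, ψ_D` are unit vectors with
`‖H ψ_n‖ < ε₁` and `|⟨ψ_m, ψ_n⟩| < ε₂` for `m ≠ n`, where `(D-1) ε₂ < 1`, then the `ψ_n`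
are linearly independent and every unit vector `ψ` in their span satisfies
`‖H ψ‖ < √D ε₁ / √(1 - (D-1) ε₂)`. -/
theorem almost_orthonormal_span_bound {n D : ℕ}
    (H : EuclideanSpace ℂ (Fin n) →L[ℂ] EuclideanSpace ℂ (Fin n))
    (hHsa : IsSelfAdjoint H)
    (ε₁ ε₂ : ℝ) (ψ : Fin D → EuclideanSpace ℂ (Fin n))
    (hunit : ∀ j, ‖ψ j‖ = 1)
    (hsmall : ∀ j, ‖H (ψ j)‖ < ε₁)
    (hortho : ∀ m j, m ≠ j → ‖(inner ℂ (ψ m) (ψ j) : ℂ)‖ < ε₂)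
    (hε₂ : ((D : ℝ) - 1) * ε₂ < 1) :
    LinearIndependent ℂ ψ ∧
      ∀ φ ∈ Submodule.span ℂ (Set.range ψ), ‖φ‖ = 1 →
        ‖H φ‖ < Real.sqrt D * ε₁ / Real.sqrt (1 - ((D : ℝ) - 1) * ε₂) := by
  set β : ℝ := 1 - ((D : ℝ) - 1) * ε₂ with hβdef
  have hβ : 0 < β := by simp [hβdef]; linarith
  constructor
  · rw [Fintype.linearIndependent_iff]
    intro c hc j
    have key := key_lb ψ ε₂ hunit hortho c
    rw [hc] at key
    simp only [norm_zero] at key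
    have hS0 : ∑ k, ‖c k‖ ^ 2 ≤ 0 := by
      by_contra h
      push_neg at h
      nlinarith
    have := (Finset.sum_eq_zero_iff_of_nonneg (fun k _ => sq_nonneg ‖c k‖)).mp
      (le_antisymm hS0 (Finset.sum_nonneg fun k _ => sq_nonneg _)) j (Finset.mem_univ j)
    have : ‖c j‖ = 0 := by nlinarith [norm_nonneg (c j)]
    simpa using this
  · intro φ hφ hφ1
    obtain ⟨c, rfl⟩ := (Submodule.mem_span_range_iff_exists_fun ℂ).mp hφ
    set S : ℝ := ∑ j, ‖c j‖ ^ 2 with hS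
    set L : ℝ := ∑ j, ‖c j‖ with hL
    have key := key_lb ψ ε₂ hunit hortho c
    rw [hφ1] at key
    have hSle : S ≤ 1 / β := by
      rw [le_div_iff₀ hβ]
      nlinarith
    have hSnn : 0 ≤ S := Finset.sum_nonneg fun k _ => sq_nonneg _
    have hnz : ∃ j, c j ≠ 0 := by
      by_contra h
      push_neg at h
      have : (∑ j, c j • ψ j) = 0 := by simp [h]
      rw [this] at hφ1
      simp at hφ1
    obtain ⟨j₀, hj₀⟩ := hnz
    have hε₁ : 0 < ε₁ := lt_of_le_of_lt (norm_nonneg _) (hsmall j₀)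
    have hHφ : H (∑ j, c j • ψ j) = ∑ j, c j • H (ψ j) := by
      rw [map_sum]
      simp
    have step0 : ‖H (∑ j, c j • ψ j)‖ ≤ ∑ j, ‖c j‖ * ‖H (ψ j)‖ := by
      rw [hHφ]
      refine le_trans (norm_sum_le _ _) (Finset.sum_le_sum fun j _ => ?_)
      rw [norm_smul]
    have step1 : ∑ j, ‖c j‖ * ‖H (ψ j)‖ < ε₁ * L := by
      rw [hL, Finset.mul_sum]
      refine Finset.sum_lt_sum (fun j _ => ?_) ⟨j₀, Finset.mem_univ j₀, ?_⟩
      · rw [mul_comm ε₁]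
        exact mul_le_mul_of_nonneg_left (hsmall j).le (norm_nonneg _)
      · rw [mul_comm ε₁]
        exact mul_lt_mul_of_pos_left (hsmall j₀) (norm_pos_iff.mpr hj₀)
    have hCS : L ^ 2 ≤ (D : ℝ) * S := by
      have := sq_sum_le_card_mul_sum_sq (s := (Finset.univ : Finset (Fin D)))
        (f := fun j => ‖c j‖)
      simpa [hL, hS] using this
    have hLnn : 0 ≤ L := Finset.sum_nonneg fun k _ => norm_nonneg _
    have step2 : L ≤ Real.sqrt D * Real.sqrt S := by
      rw [← Real.sqrt_mul (Nat.cast_nonneg D)]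
      have h7 := Real.sqrt_le_sqrt hCS
      rwa [Real.sqrt_sq hLnn] at h7
    have step3 : Real.sqrt S ≤ 1 / Real.sqrt β := by
      have h6 : Real.sqrt S ≤ Real.sqrt (1 / β) := Real.sqrt_le_sqrt hSle
      rwa [one_div, Real.sqrt_inv, ← one_div] at h6
    have step4 : ε₁ * L ≤ Real.sqrt D * ε₁ / Real.sqrt β := by
      have h5 : L ≤ Real.sqrt D * (1 / Real.sqrt β) := by
        calc L ≤ Real.sqrt D * Real.sqrt S := step2
          _ ≤ Real.sqrt D * (1 / Real.sqrt β) :=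
            mul_le_mul_of_nonneg_left step3 (Real.sqrt_nonneg _)
      calc ε₁ * L ≤ ε₁ * (Real.sqrt D * (1 / Real.sqrt β)) :=
            mul_le_mul_of_nonneg_left h5 hε₁.le
        _ = Real.sqrt D * ε₁ / Real.sqrt β := by ring
    calc ‖H (∑ j, c j • ψ j)‖ ≤ ∑ j, ‖c j‖ * ‖H (ψ j)‖ := step0
      _ < ε₁ * L := step1
      _ ≤ Real.sqrt D * ε₁ / Real.sqrt β := step4
end

section
/- Let H be an n×n complex matrix and suppose there exist D orthonormality-almost unit vectors ψ₁,…,ψ_D with ‖Hψ_j‖ < ε₁ and |⟨ψ_m,ψ_n⟩| < ε₂ < 1/(D-1) for m ≠ n. Set E_b = D ε₁ / √(1 - (D-1)ε₂). Then √(H†H) has at least D eigenvalues (with multiplicity) strictly less than E_b. -/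
open scoped ComplexOrder

/-- The square root of a positive semidefinite matrix, as defined in Mathlib (Dec 2024). -/
noncomputable def Matrix.PosSemidef.sqrt {n 𝕜 : Type*} [Fintype n] [DecidableEq n] [RCLike 𝕜]
    {A : Matrix n n 𝕜} (hA : A.PosSemidef) : Matrix n n 𝕜 :=
  hA.1.eigenvectorUnitary.1 * Matrix.diagonal ((↑) ∘ (Real.sqrt ∘ hA.1.eigenvalues)) *
    (star hA.1.eigenvectorUnitary : Matrix n n 𝕜)

theorem Matrix.PosSemidef.posSemidef_sqrt {n 𝕜 : Type*} [Fintype n] [DecidableEq n] [RCLike 𝕜]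
    {A : Matrix n n 𝕜} (hA : A.PosSemidef) : hA.sqrt.PosSemidef := by
  unfold Matrix.PosSemidef.sqrt
  exact (Matrix.posSemidef_diagonal_iff.mpr fun i => by simp [Real.sqrt_nonneg]).mul_mul_conjTranspose_same _

private lemma sqrt_mul_self_aux {n 𝕜 : Type*} [Fintype n] [DecidableEq n] [RCLike 𝕜]
    {A : Matrix n n 𝕜} (hA : A.PosSemidef) : hA.sqrt * hA.sqrt = A := by
  unfold Matrix.PosSemidef.sqrt
  have hU : (star hA.1.eigenvectorUnitary : Matrix n n 𝕜) * hA.1.eigenvectorUnitary.1 = 1 :=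
    hA.1.eigenvectorUnitary.2.1
  have h := hA.1.spectral_theorem
  calc _ = hA.1.eigenvectorUnitary.1 * (Matrix.diagonal ((↑) ∘ (Real.sqrt ∘ hA.1.eigenvalues)) *
        ((star hA.1.eigenvectorUnitary : Matrix n n 𝕜) * hA.1.eigenvectorUnitary.1) *
        Matrix.diagonal ((↑) ∘ (Real.sqrt ∘ hA.1.eigenvalues))) *
        (star hA.1.eigenvectorUnitary : Matrix n n 𝕜) := by simp only [mul_assoc]
    _ = hA.1.eigenvectorUnitary.1 * Matrix.diagonal (RCLike.ofReal ∘ hA.1.eigenvalues) *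
        (star hA.1.eigenvectorUnitary : Matrix n n 𝕜) := by
      rw [hU, mul_one, Matrix.diagonal_mul_diagonal]
      have hs : ∀ i, Real.sqrt (hA.1.eigenvalues i) * Real.sqrt (hA.1.eigenvalues i)
          = hA.1.eigenvalues i := fun i => Real.mul_self_sqrt (hA.eigenvalues_nonneg i)
      simp only [Function.comp_def, ← RCLike.ofReal_mul, hs]
    _ = A := h.symm

set_option maxHeartbeats 1000000

private lemma aux_indep {n D : ℕ} {ε₂ : ℝ} (ψ : Fin D → EuclideanSpace ℂ (Fin n))
    (hunit : ∀ j, ‖ψ j‖ = 1)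
    (hortho : ∀ m j, m ≠ j → ‖(inner ℂ (ψ m) (ψ j) : ℂ)‖ < ε₂)
    (hε₂ : ((D : ℝ) - 1) * ε₂ < 1) : LinearIndependent ℂ ψ := by
  rw [Fintype.linearIndependent_iff]
  intro g hg i
  obtain ⟨j, -, hj⟩ := Finset.exists_max_image Finset.univ (fun m => ‖g m‖)
    ⟨i, Finset.mem_univ i⟩
  -- it suffices to show g j = 0
  suffices hgj : g j = 0 by
    have := hj i (Finset.mem_univ i)
    rw [hgj, norm_zero] at this
    exact norm_eq_zero.mp (le_antisymm this (norm_nonneg _))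
  by_contra hgj
  have h0 : (inner ℂ (ψ j) (∑ m, g m • ψ m) : ℂ) = 0 := by rw [hg, inner_zero_right]
  rw [inner_sum] at h0
  simp only [inner_smul_right] at h0
  rw [← Finset.add_sum_erase Finset.univ _ (Finset.mem_univ j)] at h0
  have hjj : (inner ℂ (ψ j) (ψ j) : ℂ) = 1 := by
    rw [inner_self_eq_norm_sq_to_K, hunit j]; norm_num
  rw [hjj, mul_one] at h0
  have h1 : g j = -∑ m ∈ Finset.univ.erase j, g m * (inner ℂ (ψ j) (ψ m) : ℂ) := by
    linear_combination h0
  have h2 : ‖g j‖ ≤ ((D : ℝ) - 1) * ε₂ * ‖g j‖ := by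
    calc ‖g j‖ ≤ ∑ m ∈ Finset.univ.erase j, ‖g m * (inner ℂ (ψ j) (ψ m) : ℂ)‖ := by
          rw [h1, norm_neg]; exact norm_sum_le _ _
      _ ≤ ∑ m ∈ Finset.univ.erase j, ‖g j‖ * ε₂ := by
          apply Finset.sum_le_sum
          intro m hm
          rw [norm_mul]
          exact mul_le_mul (hj m (Finset.mem_univ m))
            (le_of_lt (hortho j m (Ne.symm (Finset.ne_of_mem_erase hm))))
            (norm_nonneg _) (norm_nonneg _)
      _ = ((D : ℝ) - 1) * ε₂ * ‖g j‖ := by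
          rw [Finset.sum_const, Finset.card_erase_of_mem (Finset.mem_univ j)]
          simp only [Finset.card_univ, Fintype.card_fin, nsmul_eq_mul]
          have hD1 : (1:ℕ) ≤ D := Nat.one_le_iff_ne_zero.2 (by
            rintro rfl; exact absurd j.2 (by simp))
          push_cast [hD1]
          ring
  have hgj' : 0 < ‖g j‖ := norm_pos_iff.2 hgj
  nlinarith [hgj']
set_option maxHeartbeats 1000000

private lemma aux_span_bound {n D : ℕ} (H : Matrix (Fin n) (Fin n) ℂ)
    {ε₁ ε₂ : ℝ} (ψ : Fin D → EuclideanSpace ℂ (Fin n))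
    (hunit : ∀ j, ‖ψ j‖ = 1)
    (hsmall : ∀ j, ‖(Matrix.toEuclideanCLM (𝕜 := ℂ) H) (ψ j)‖ < ε₁)
    (hortho : ∀ m j, m ≠ j → ‖(inner ℂ (ψ m) (ψ j) : ℂ)‖ < ε₂)
    (hε₂ : ((D : ℝ) - 1) * ε₂ < 1) (hD : 0 < D)
    (v : EuclideanSpace ℂ (Fin n)) (hv : v ∈ Submodule.span ℂ (Set.range ψ))
    (hv1 : ‖v‖ = 1) :
    ‖(Matrix.toEuclideanCLM (𝕜 := ℂ) H) v‖
      < (D : ℝ) * ε₁ / Real.sqrt (1 - ((D : ℝ) - 1) * ε₂) := by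
  haveI : Nonempty (Fin D) := ⟨⟨0, hD⟩⟩
  obtain ⟨c, hc⟩ := (Submodule.mem_span_range_iff_exists_fun ℂ).1 hv
  set S : ℝ := ∑ j, ‖c j‖ ^ 2 with hS
  set d : ℝ := 1 - ((D : ℝ) - 1) * ε₂ with hd
  have hdpos : 0 < d := by rw [hd]; linarith
  have hSnn : 0 ≤ S := Finset.sum_nonneg fun j _ => sq_nonneg _
  -- Step A : S * d ≤ 1
  have hSd : S * d ≤ 1 := by
    have hnorm : (1 : ℝ) = ∑ m, ∑ j,
        (RCLike.re ((starRingEnd ℂ) (c m) * (c j * (inner ℂ (ψ m) (ψ j) : ℂ)))) := by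
      have h1 : (inner ℂ v v : ℂ)
          = ∑ m, ∑ j, (starRingEnd ℂ) (c m) * (c j * (inner ℂ (ψ m) (ψ j) : ℂ)) := by
        rw [← hc, sum_inner]
        congr 1; ext m
        rw [inner_sum]
        simp only [inner_smul_left, inner_smul_right]
        exact Finset.sum_congr rfl fun j _ => by ring
      have h2 : RCLike.re (inner ℂ v v : ℂ) = 1 := by
        rw [inner_self_eq_norm_sq_to_K, hv1]; norm_num
      rw [← h2, h1, map_sum]
      exact Finset.sum_congr rfl fun m _ => by rw [map_sum]
    -- split diagonal and off-diagonal
    have hdiag : ∀ m : Fin D,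
        RCLike.re ((starRingEnd ℂ) (c m) * (c m * (inner ℂ (ψ m) (ψ m) : ℂ))) = ‖c m‖ ^ 2 := by
      intro m
      have : (inner ℂ (ψ m) (ψ m) : ℂ) = 1 := by
        rw [inner_self_eq_norm_sq_to_K, hunit m]; norm_num
      rw [this, mul_one, RCLike.conj_mul]
      norm_num [← Complex.ofReal_pow]
    have hsplit : (1 : ℝ) = S + ∑ m, ∑ j ∈ Finset.univ.erase m,
        RCLike.re ((starRingEnd ℂ) (c m) * (c j * (inner ℂ (ψ m) (ψ j) : ℂ))) := by
      rw [hnorm, hS, ← Finset.sum_add_distrib]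
      refine Finset.sum_congr rfl fun m _ => ?_
      rw [← hdiag m]
      exact (Finset.add_sum_erase Finset.univ _ (Finset.mem_univ m)).symm
    -- bound off-diagonal terms
    have hoff : ∀ m, ∀ j ∈ Finset.univ.erase m,
        -(‖c m‖ * ‖c j‖ * ε₂) ≤
          RCLike.re ((starRingEnd ℂ) (c m) * (c j * (inner ℂ (ψ m) (ψ j) : ℂ))) := by
      intro m j hj
      have hmj : m ≠ j := (Finset.ne_of_mem_erase hj).symm
      have hb : ‖(starRingEnd ℂ) (c m) * (c j * (inner ℂ (ψ m) (ψ j) : ℂ))‖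
          ≤ ‖c m‖ * ‖c j‖ * ε₂ := by
        rw [norm_mul, norm_mul, RCLike.norm_conj, mul_assoc]
        refine mul_le_mul_of_nonneg_left ?_ (norm_nonneg _)
        exact mul_le_mul_of_nonneg_left (le_of_lt (hortho m j hmj)) (norm_nonneg _)
      have := neg_abs_le (RCLike.re ((starRingEnd ℂ) (c m) * (c j * (inner ℂ (ψ m) (ψ j) : ℂ))))
      have habs := RCLike.abs_re_le_norm ((starRingEnd ℂ) (c m) * (c j * (inner ℂ (ψ m) (ψ j) : ℂ)))
      linarith
    -- the off-diagonal double sum of ‖c m‖‖c j‖ε₂ is ≤ (D-1) ε₂ S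
    have hcross : ∑ m, ∑ j ∈ Finset.univ.erase m, (‖c m‖ * ‖c j‖ * ε₂)
        ≤ ((D : ℝ) - 1) * ε₂ * S := by
      rcases le_or_gt 0 ε₂ with hε₂nn | hε₂neg
      · have h1 : ∑ m, ∑ j ∈ Finset.univ.erase m, (‖c m‖ * ‖c j‖)
            ≤ ((D : ℝ) - 1) * S := by
          have expand : ∑ m, ∑ j ∈ Finset.univ.erase m, (‖c m‖ * ‖c j‖)
              = (∑ j, ‖c j‖) ^ 2 - S := by
            rw [hS, sq, Finset.sum_mul_sum]
            rw [← Finset.sum_sub_distrib]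
            refine Finset.sum_congr rfl fun m _ => ?_
            have h5 := Finset.add_sum_erase Finset.univ (fun j => ‖c m‖ * ‖c j‖)
              (Finset.mem_univ m)
            rw [← h5, sq]
            ring
          have cs : (∑ j, ‖c j‖) ^ 2 ≤ (D : ℝ) * S := by
            have h6 : (∑ j, ‖c j‖) ^ 2 ≤
                ((Finset.univ : Finset (Fin D)).card : ℝ) * ∑ j, ‖c j‖ ^ 2 :=
              sq_sum_le_card_mul_sum_sq
            rwa [Finset.card_univ, Fintype.card_fin, ← hS] at h6
          rw [expand]; linarith
        calc ∑ m, ∑ j ∈ Finset.univ.erase m, (‖c m‖ * ‖c j‖ * ε₂)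
            = (∑ m, ∑ j ∈ Finset.univ.erase m, (‖c m‖ * ‖c j‖)) * ε₂ := by
              rw [Finset.sum_mul]
              exact Finset.sum_congr rfl fun m _ => by rw [Finset.sum_mul]
          _ ≤ ((D : ℝ) - 1) * S * ε₂ := mul_le_mul_of_nonneg_right h1 hε₂nn
          _ = ((D : ℝ) - 1) * ε₂ * S := by ring
      · -- ε₂ < 0 forces D = 1, all sums empty
        have hD1 : D = 1 := by
          by_contra hD1
          have hD2 : 2 ≤ D := by omega
          have := hortho ⟨0, by omega⟩ ⟨1, by omega⟩ (by simp [Fin.ext_iff])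
          have := norm_nonneg (inner ℂ (ψ ⟨0, by omega⟩) (ψ ⟨1, by omega⟩) : ℂ)
          linarith
        subst hD1
        have hempty : ∀ m : Fin 1, (Finset.univ.erase m) = ∅ := by
          intro m
          apply Finset.eq_empty_of_forall_notMem
          intro j hj
          exact (Finset.ne_of_mem_erase hj) (Subsingleton.elim j m)
        simp [hempty]
    have hbound : S - ((D : ℝ) - 1) * ε₂ * S ≤ 1 := by
      have h3 : ∑ m, ∑ j ∈ Finset.univ.erase m, (-(‖c m‖ * ‖c j‖ * ε₂))
          ≤ ∑ m, ∑ j ∈ Finset.univ.erase m,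
            RCLike.re ((starRingEnd ℂ) (c m) * (c j * (inner ℂ (ψ m) (ψ j) : ℂ))) :=
        Finset.sum_le_sum fun m _ => Finset.sum_le_sum fun j hj => hoff m j hj
      have h4 : ∑ m, ∑ j ∈ Finset.univ.erase m, (-(‖c m‖ * ‖c j‖ * ε₂))
          = -∑ m, ∑ j ∈ Finset.univ.erase m, (‖c m‖ * ‖c j‖ * ε₂) := by
        simp [Finset.sum_neg_distrib]
      rw [h4] at h3
      linarith [hsplit, hcross]
    rw [hd]; linarith
  -- Step B/C : norm bound
  have hne : (Finset.univ : Finset (Fin D)).Nonempty := Finset.univ_nonempty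
  set μ : ℝ := Finset.univ.sup' hne (fun j => ‖(Matrix.toEuclideanCLM (𝕜 := ℂ) H) (ψ j)‖) with hμ
  have hμlt : μ < ε₁ := (Finset.sup'_lt_iff hne).2 fun j _ => hsmall j
  have hμnn : 0 ≤ μ := le_trans (norm_nonneg _)
    (Finset.le_sup' (f := fun j => ‖(Matrix.toEuclideanCLM (𝕜 := ℂ) H) (ψ j)‖)
      (Finset.mem_univ (Classical.arbitrary (Fin D))))
  have hHv : ‖(Matrix.toEuclideanCLM (𝕜 := ℂ) H) v‖ ≤ μ * ∑ j, ‖c j‖ := by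
    calc ‖(Matrix.toEuclideanCLM (𝕜 := ℂ) H) v‖
        = ‖∑ j, c j • (Matrix.toEuclideanCLM (𝕜 := ℂ) H) (ψ j)‖ := by
          rw [← hc, map_sum]; simp
      _ ≤ ∑ j, ‖c j • (Matrix.toEuclideanCLM (𝕜 := ℂ) H) (ψ j)‖ := norm_sum_le _ _
      _ ≤ ∑ j, ‖c j‖ * μ := by
          refine Finset.sum_le_sum fun j _ => ?_
          rw [norm_smul]
          exact mul_le_mul_of_nonneg_left
            (Finset.le_sup' (f := fun j => ‖(Matrix.toEuclideanCLM (𝕜 := ℂ) H) (ψ j)‖)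
              (Finset.mem_univ j)) (norm_nonneg _)
      _ = μ * ∑ j, ‖c j‖ := by rw [← Finset.sum_mul]; ring
  -- Step D : combine
  have hsum_sq : (∑ j, ‖c j‖) ^ 2 ≤ (D : ℝ) * S := by
    have h6 : (∑ j, ‖c j‖) ^ 2 ≤
        ((Finset.univ : Finset (Fin D)).card : ℝ) * ∑ j, ‖c j‖ ^ 2 :=
      sq_sum_le_card_mul_sum_sq
    rwa [Finset.card_univ, Fintype.card_fin, ← hS] at h6
  have hsumnn : 0 ≤ ∑ j, ‖c j‖ := Finset.sum_nonneg fun j _ => norm_nonneg _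
  have hsqd : 0 < Real.sqrt d := Real.sqrt_pos.2 hdpos
  rw [lt_div_iff₀ hsqd]
  have key : (∑ j, ‖c j‖) * Real.sqrt d ≤ (D : ℝ) := by
    have h1 : ((∑ j, ‖c j‖) * Real.sqrt d) ^ 2 ≤ (D : ℝ) ^ 2 := by
      rw [mul_pow, Real.sq_sqrt (le_of_lt hdpos)]
      calc (∑ j, ‖c j‖) ^ 2 * d ≤ ((D : ℝ) * S) * d :=
            mul_le_mul_of_nonneg_right hsum_sq (le_of_lt hdpos)
        _ = (D : ℝ) * (S * d) := by ring
        _ ≤ (D : ℝ) * 1 := mul_le_mul_of_nonneg_left hSd (Nat.cast_nonneg D)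
        _ ≤ (D : ℝ) ^ 2 := by
            have : (1:ℝ) ≤ (D:ℝ) := by exact_mod_cast hD
            nlinarith
    have h2 : 0 ≤ (∑ j, ‖c j‖) * Real.sqrt d := mul_nonneg hsumnn (le_of_lt hsqd)
    nlinarith
  calc ‖(Matrix.toEuclideanCLM (𝕜 := ℂ) H) v‖ * Real.sqrt d
      ≤ (μ * ∑ j, ‖c j‖) * Real.sqrt d :=
        mul_le_mul_of_nonneg_right hHv (le_of_lt hsqd)
    _ = μ * ((∑ j, ‖c j‖) * Real.sqrt d) := by ring
    _ ≤ μ * (D : ℝ) := mul_le_mul_of_nonneg_left key hμnn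
    _ < ε₁ * (D : ℝ) := by
        refine mul_lt_mul_of_pos_right hμlt ?_
        exact_mod_cast hD
    _ = (D : ℝ) * ε₁ := by ring

private lemma aux_big_bound {n : ℕ} (H : Matrix (Fin n) (Fin n) ℂ) (E : ℝ) (hE : 0 ≤ E)
    (v : EuclideanSpace ℂ (Fin n))
    (hv : ∀ i, ((Matrix.posSemidef_conjTranspose_mul_self H).posSemidef_sqrt).1.eigenvalues i < E →
      (inner ℂ (((Matrix.posSemidef_conjTranspose_mul_self H).posSemidef_sqrt).1.eigenvectorBasis i) v : ℂ) = 0) :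
    E * ‖v‖ ≤ ‖(Matrix.toEuclideanCLM (𝕜 := ℂ) H) v‖ := by
  set hH := Matrix.posSemidef_conjTranspose_mul_self H with hHdef
  set A := hH.sqrt with hA0
  set hA := hH.posSemidef_sqrt.1 with hA1
  set b := hA.eigenvectorBasis with hbdef
  set lam := hA.eigenvalues with hlamdef
  set T := Matrix.toEuclideanCLM (𝕜 := ℂ) A with hT
  -- T is self-adjoint
  have hTsa : ContinuousLinearMap.adjoint T = T := by
    rw [hT, ← ContinuousLinearMap.star_eq_adjoint, ← map_star, Matrix.star_eq_conjTranspose]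
    exact congrArg _ hA
  -- T (b i) = lam i • b i
  have hTb : ∀ i, T (b i) = (lam i : ℂ) • b i := by
    intro i
    apply (WithLp.equiv 2 (Fin n → ℂ)).injective
    rw [hT]
    have := hA.mulVec_eigenvectorBasis i
    show Matrix.mulVec A ⇑(b i) = ⇑((lam i : ℂ) • b i)
    simp only [← hbdef, ← hlamdef, ← hA0] at this ⊢
    rw [this]
    rfl
  -- ‖H v‖ ^ 2 = ‖T v‖ ^ 2
  have hHT : ‖(Matrix.toEuclideanCLM (𝕜 := ℂ) H) v‖ ^ 2 = ‖T v‖ ^ 2 := by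
    have e1 : (inner ℂ ((Matrix.toEuclideanCLM (𝕜 := ℂ) H) v) ((Matrix.toEuclideanCLM (𝕜 := ℂ) H) v) : ℂ)
        = inner ℂ (T v) (T v) := by
      rw [← ContinuousLinearMap.adjoint_inner_right (Matrix.toEuclideanCLM (𝕜 := ℂ) H)]
      rw [← ContinuousLinearMap.star_eq_adjoint, ← map_star, Matrix.star_eq_conjTranspose]
      have e2 : (Matrix.toEuclideanCLM (𝕜 := ℂ) H.conjTranspose)
          ((Matrix.toEuclideanCLM (𝕜 := ℂ) H) v) = T (T v) := by
        rw [hT, ← ContinuousLinearMap.comp_apply, ← ContinuousLinearMap.mul_def, ← map_mul,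
          ← ContinuousLinearMap.comp_apply, ← ContinuousLinearMap.mul_def, ← map_mul]
        congr 1
        rw [hA0, sqrt_mul_self_aux hH]
      rw [e2, ← ContinuousLinearMap.adjoint_inner_right T, hTsa]
    rw [@norm_sq_eq_re_inner ℂ, @norm_sq_eq_re_inner ℂ, e1]
  -- representation of T v
  have hrepr : ∀ i, b.repr (T v) i = (lam i : ℂ) * b.repr v i := by
    intro i
    rw [b.repr_apply_apply, b.repr_apply_apply,
      ← ContinuousLinearMap.adjoint_inner_left T, hTsa, hTb i, inner_smul_left]
    simp
  have hnormsq : ∀ w : EuclideanSpace ℂ (Fin n), ‖w‖ ^ 2 = ∑ i, ‖b.repr w i‖ ^ 2 := by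
    intro w
    rw [← b.repr.norm_map w, EuclideanSpace.norm_eq, Real.sq_sqrt]
    exact Finset.sum_nonneg fun i _ => sq_nonneg _
  have hTv : ‖T v‖ ^ 2 = ∑ i, (lam i) ^ 2 * ‖b.repr v i‖ ^ 2 := by
    rw [hnormsq (T v)]
    refine Finset.sum_congr rfl fun i _ => ?_
    rw [hrepr i, norm_mul, mul_pow, Complex.norm_real, Real.norm_eq_abs, sq_abs]
  have hlower : E ^ 2 * ‖v‖ ^ 2 ≤ ∑ i, (lam i) ^ 2 * ‖b.repr v i‖ ^ 2 := by
    rw [hnormsq v, Finset.mul_sum]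
    refine Finset.sum_le_sum fun i _ => ?_
    rcases lt_or_ge (lam i) E with hlt | hge
    · have : b.repr v i = 0 := by rw [b.repr_apply_apply]; exact hv i hlt
      simp [this]
    · have : E ^ 2 ≤ (lam i) ^ 2 := by nlinarith
      exact mul_le_mul_of_nonneg_right this (sq_nonneg _)
  have hfin : (E * ‖v‖) ^ 2 ≤ ‖(Matrix.toEuclideanCLM (𝕜 := ℂ) H) v‖ ^ 2 := by
    rw [hHT, hTv, mul_pow]; exact hlower
  have h1 : 0 ≤ E * ‖v‖ := mul_nonneg hE (norm_nonneg _)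
  nlinarith [norm_nonneg ((Matrix.toEuclideanCLM (𝕜 := ℂ) H) v)]


/-- If there exist `D` almost-orthonormal unit vectors `ψ_j` with `‖H ψ_j‖ < ε₁` and
`|⟨ψ_m, ψ_j⟩| < ε₂ < 1/(D-1)` for `m ≠ j`, then setting
`E_b = D ε₁ / √(1 - (D-1) ε₂)`, the matrix `√(Hᴴ H)` has at least `D` eigenvalues
(with multiplicity) strictly less than `E_b`. -/
theorem low_energy_eigenvalue_count {n D : ℕ}
    (H : Matrix (Fin n) (Fin n) ℂ)
    (ε₁ ε₂ : ℝ) (ψ : Fin D → EuclideanSpace ℂ (Fin n))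
    (hunit : ∀ j, ‖ψ j‖ = 1)
    (hsmall : ∀ j, ‖(Matrix.toEuclideanCLM (𝕜 := ℂ) H) (ψ j)‖ < ε₁)
    (hortho : ∀ m j, m ≠ j → ‖(inner ℂ (ψ m) (ψ j) : ℂ)‖ < ε₂)
    (hε₂ : ((D : ℝ) - 1) * ε₂ < 1) :
    D ≤ (Finset.univ.filter fun j : Fin n =>
        ((Matrix.posSemidef_conjTranspose_mul_self H).posSemidef_sqrt).1.eigenvalues j
          < (D : ℝ) * ε₁ / Real.sqrt (1 - ((D : ℝ) - 1) * ε₂)).card := by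
  classical
  by_contra hcon
  push_neg at hcon
  set Eb : ℝ := (D : ℝ) * ε₁ / Real.sqrt (1 - ((D : ℝ) - 1) * ε₂) with hEbdef
  set Sm : Finset (Fin n) := Finset.univ.filter fun j : Fin n =>
      ((Matrix.posSemidef_conjTranspose_mul_self H).posSemidef_sqrt).1.eigenvalues j < Eb
    with hSmdef
  have hD : 0 < D := by omega
  have hε₁ : 0 < ε₁ := lt_of_le_of_lt (norm_nonneg _) (hsmall ⟨0, hD⟩)
  have hdpos : (0:ℝ) < 1 - ((D : ℝ) - 1) * ε₂ := by linarith
  have hEbpos : 0 < Eb := by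
    rw [hEbdef]
    apply div_pos (mul_pos (by exact_mod_cast hD) hε₁) (Real.sqrt_pos.2 hdpos)
  set b := ((Matrix.posSemidef_conjTranspose_mul_self H).posSemidef_sqrt).1.eigenvectorBasis
    with hbdef
  set U : Submodule ℂ (EuclideanSpace ℂ (Fin n)) :=
    Submodule.span ℂ (↑(Sm.image fun i => b i) : Set (EuclideanSpace ℂ (Fin n))) with hUdef
  have hU : Module.finrank ℂ U ≤ Sm.card :=
    le_trans (finrank_span_finset_le_card _) (Finset.card_image_le)
  set V : Submodule ℂ (EuclideanSpace ℂ (Fin n)) := Submodule.span ℂ (Set.range ψ) with hVdef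
  have hV : Module.finrank ℂ V = D := by
    rw [hVdef, finrank_span_eq_card (aux_indep ψ hunit hortho hε₂), Fintype.card_fin]
  have hdim : 0 < Module.finrank ℂ (V ⊓ Uᗮ : Submodule ℂ (EuclideanSpace ℂ (Fin n))) := by
    have h1 := Submodule.finrank_sup_add_finrank_inf_eq V Uᗮ
    have h2 : Module.finrank ℂ (V ⊔ Uᗮ : Submodule ℂ (EuclideanSpace ℂ (Fin n))) ≤ n := by
      refine le_trans (Submodule.finrank_le _) ?_
      rw [finrank_euclideanSpace_fin]
    have h3 := Submodule.finrank_add_finrank_orthogonal U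
    rw [finrank_euclideanSpace_fin] at h3
    omega
  obtain ⟨w, hw, hw0⟩ := Submodule.exists_mem_ne_zero_of_ne_bot
    (p := (V ⊓ Uᗮ : Submodule ℂ (EuclideanSpace ℂ (Fin n)))) (by
      intro h
      rw [h, finrank_bot] at hdim
      omega)
  have hwn : ‖w‖ ≠ 0 := norm_ne_zero_iff.2 hw0
  set v : EuclideanSpace ℂ (Fin n) := (‖w‖⁻¹ : ℝ) • w with hvdef
  have hv1 : ‖v‖ = 1 := by
    rw [hvdef, norm_smul, norm_inv, norm_norm, inv_mul_cancel₀ hwn]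
  have hvV : v ∈ V := Submodule.smul_of_tower_mem _ _ hw.1
  have hvU : v ∈ Uᗮ := Submodule.smul_of_tower_mem _ _ hw.2
  have hlt := aux_span_bound H ψ hunit hsmall hortho hε₂ hD v hvV hv1
  have hinner : ∀ i, ((Matrix.posSemidef_conjTranspose_mul_self H).posSemidef_sqrt).1.eigenvalues i
      < Eb → (inner ℂ (b i) v : ℂ) = 0 := by
    intro i hi
    have hbi : b i ∈ U := by
      apply Submodule.subset_span
      simp only [Finset.coe_image, Set.mem_image]
      exact ⟨i, by simp [hSmdef, hi], rfl⟩
    exact (Submodule.mem_orthogonal U v).1 hvU (b i) hbi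
  have hge := aux_big_bound H Eb (le_of_lt hEbpos) v hinner
  rw [hv1, mul_one] at hge
  rw [hEbdef] at hge
  exact absurd hlt (not_lt.2 hge)
end
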